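/- Fix n ∈ ℕ, ε ∈ [0, 1/2), 1 ≤ K ≤ 2^n, and m ≤ n. Write p₊ = 1/2 + ε and p₋ = 1/2 − ε, and let B be the Bernoulli distribution with parameter p₊ on {0,1}^n. If ∑_{i=0}^{m} C(n,i) ≤ K, then the K-th Ky Fan norm of B satisfies ‖B‖_K ≥ ∑_{i=0}^{m} C(n,i) p₋^{i} p₊^{n−i} ≥ C(n,m) p₋^{m} p₊^{n−m}, where C(n,i) denotes the binomial coefficient. -/

import Mathlib

open Finset

/-- Hamming weight of a binary string. -/
def hammingWeight {n : ℕ} (x : Fin n → Bool) : ℕ :=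
  (Finset.univ.filter (fun j => x j = true)).card

/-- The Bernoulli distribution with parameter `p₊ = 1/2 + ε` on `{0,1}^n`:
`B(x) = (1/2+ε)^(n−w(x)) (1/2−ε)^(w(x))`. -/
noncomputable def bern (n : ℕ) (ε : ℝ) (x : Fin n → Bool) : ℝ :=
  (1/2 + ε) ^ (n - hammingWeight x) * (1/2 - ε) ^ (hammingWeight x)

/-- The `K`-th Ky Fan norm of `Q` : the sum of the `K` largest values of `Q`
(with multiplicity), i.e. the maximal sum of `Q` over subsets of cardinality `K`. -/
noncomputable def kyFan {Z : Type*} [Fintype Z] (K : ℕ) (Q : Z → ℝ) : ℝ :=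
  sSup ((fun S : Finset Z => ∑ z ∈ S, Q z) '' {S : Finset Z | S.card = K})

lemma card_weight_eq (n i : ℕ) :
    ((Finset.univ : Finset (Fin n → Bool)).filter (fun x => hammingWeight x = i)).card
      = n.choose i := by
  have : ((Finset.univ : Finset (Fin n → Bool)).filter (fun x => hammingWeight x = i)).card
      = (Finset.powersetCard i (Finset.univ : Finset (Fin n))).card := by
    apply Finset.card_nbij' (i := fun x => Finset.univ.filter (fun j => x j = true))
      (j := fun s j => decide (j ∈ s))
    · intro x hx
      simp only [Finset.mem_coe, Finset.mem_filter, Finset.mem_univ, true_and] at hx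
      simp [Finset.mem_powersetCard, hammingWeight] at *
      exact hx
    · intro s hs
      simp only [Finset.mem_coe, Finset.mem_powersetCard] at hs
      simp [hammingWeight, ← hs.2]
    · intro x hx
      funext j
      simp
    · intro s hs
      ext j
      simp
  rw [this, Finset.card_powersetCard, Finset.card_univ, Fintype.card_fin]

theorem kyFan_bernoulli_lower_bound
    (n : ℕ) (ε : ℝ) (hε0 : 0 ≤ ε) (hε : ε < 1/2)
    (K : ℕ) (hK1 : 1 ≤ K) (hK2 : K ≤ 2 ^ n) (m : ℕ) (hmn : m ≤ n)
    (hsum : ∑ i ∈ Finset.range (m + 1), n.choose i ≤ K) :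
    (∑ i ∈ Finset.range (m + 1),
        (n.choose i : ℝ) * (1/2 - ε) ^ i * (1/2 + ε) ^ (n - i)) ≤ kyFan K (bern n ε) ∧
    (n.choose m : ℝ) * (1/2 - ε) ^ m * (1/2 + ε) ^ (n - m) ≤
      ∑ i ∈ Finset.range (m + 1),
        (n.choose i : ℝ) * (1/2 - ε) ^ i * (1/2 + ε) ^ (n - i) := by
  have hpa : (0:ℝ) ≤ 1/2 + ε := by linarith
  have hpb : (0:ℝ) ≤ 1/2 - ε := by linarith
  have hbern : ∀ x : Fin n → Bool, 0 ≤ bern n ε x := fun x =>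
    mul_nonneg (pow_nonneg hpa _) (pow_nonneg hpb _)
  have hterm : ∀ i, 0 ≤ (n.choose i : ℝ) * (1/2 - ε) ^ i * (1/2 + ε) ^ (n - i) := fun i =>
    mul_nonneg (mul_nonneg (Nat.cast_nonneg _) (pow_nonneg hpb _)) (pow_nonneg hpa _)
  constructor
  · -- main bound
    set S : Finset (Fin n → Bool) := Finset.univ.filter (fun x => hammingWeight x ≤ m) with hS
    have hScard : S.card = ∑ i ∈ Finset.range (m + 1), n.choose i := by
      have : S = (Finset.range (m+1)).biUnion
          (fun i => Finset.univ.filter (fun x => hammingWeight x = i)) := by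
        ext x
        simp [hS, Nat.lt_succ_iff]
      rw [this, Finset.card_biUnion]
      · exact Finset.sum_congr rfl fun i _ => card_weight_eq n i
      · intro a _ b _ hab
        simp only [Finset.disjoint_left, Finset.mem_filter]
        rintro x ⟨_, rfl⟩ ⟨_, rfl⟩
        exact hab rfl
    have hSsum : ∑ x ∈ S, bern n ε x = ∑ i ∈ Finset.range (m + 1),
        (n.choose i : ℝ) * (1/2 - ε) ^ i * (1/2 + ε) ^ (n - i) := by
      have hmap : ∀ x ∈ S, hammingWeight x ∈ Finset.range (m+1) := by
        intro x hx
        simp only [hS, Finset.mem_filter] at hx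
        simp [Nat.lt_succ_iff, hx.2]
      rw [← Finset.sum_fiberwise_of_maps_to hmap]
      refine Finset.sum_congr rfl fun i hi => ?_
      have hfil : S.filter (fun x => hammingWeight x = i)
          = Finset.univ.filter (fun x => hammingWeight x = i) := by
        ext x
        simp only [hS, Finset.mem_filter, Finset.mem_univ, true_and, and_iff_right_iff_imp]
        rintro rfl
        exact Nat.lt_succ_iff.mp (Finset.mem_range.mp hi)
      rw [hfil]
      rw [Finset.sum_congr rfl (fun x hx => ?_) (g := fun _ => (1/2 + ε) ^ (n - i) * (1/2 - ε) ^ i)]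
      · rw [Finset.sum_const, card_weight_eq, nsmul_eq_mul]
        ring
      · simp only [Finset.mem_filter] at hx
        simp [bern, hx.2]
    -- extend S to a set of cardinality K
    obtain ⟨T, hST, _, hTcard⟩ := Finset.exists_subsuperset_card_eq (n := K) (S.subset_univ)
      (by rw [hScard]; exact hsum)
      (by rwa [Finset.card_univ, Fintype.card_fun, Fintype.card_bool, Fintype.card_fin])
    have h1 : ∑ x ∈ S, bern n ε x ≤ ∑ x ∈ T, bern n ε x :=
      Finset.sum_le_sum_of_subset_of_nonneg hST (fun x _ _ => hbern x)
    have h2 : ∑ x ∈ T, bern n ε x ≤ kyFan K (bern n ε) := by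
      apply le_csSup
      · exact (Set.Finite.image _ (Set.toFinite _)).bddAbove
      · exact ⟨T, hTcard, rfl⟩
    calc _ = ∑ x ∈ S, bern n ε x := hSsum.symm
    _ ≤ _ := h1.trans h2
  · exact Finset.single_le_sum (fun i _ => hterm i) (Finset.self_mem_range_succ m)
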